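/- Let L be a first-order language with at most κ symbols, where κ is an infinite cardinal, let δ be a limit ordinal, and let M be an L-structure of cardinality h_δ(κ). Then there exists an increasing chain ⟨M_i : i < δ⟩ of elementary substructures of M such that M_i has cardinality h_i(κ) for each i < δ, M_i ⊆ M_j whenever i ≤ j < δ, and M is the union of the M_i. -/

import Mathlib

/-- The Hanf number function `h_α(κ)`, defined by transfinite recursion:
`h_0(κ) = κ`, `h_{α+1}(κ) = ℶ_{(2^{h_α(κ)})⁺}`, and `h_δ(κ) = sup_{α<δ} h_α(κ)`
for `δ` a limit ordinal. -/
noncomputable def hanf (κ : Cardinal) (α : Ordinal) : Cardinal :=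
  Ordinal.limitRecOn α κ
    (fun _ ih => Cardinal.beth (Order.succ ((2 : Cardinal) ^ ih)).ord)
    (fun δ _ ih => ⨆ i : Set.Iio δ, ih i i.2)

open FirstOrder Cardinal

universe u

theorem hanf_zero (κ : Cardinal.{u}) : hanf κ (0 : Ordinal.{u}) = κ := by
  unfold hanf; exact Ordinal.limitRecOn_zero _ _ _

theorem hanf_succ (κ : Cardinal.{u}) (α : Ordinal.{u}) :
    hanf κ (Order.succ α) = Cardinal.beth (Order.succ ((2 : Cardinal) ^ hanf κ α)).ord := by
  unfold hanf; exact Ordinal.limitRecOn_succ _ _ _ _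

theorem hanf_limit (κ : Cardinal.{u}) {δ : Ordinal.{u}} (h : Order.IsSuccLimit δ) :
    hanf κ δ = ⨆ i : Set.Iio δ, hanf κ i := by
  unfold hanf; exact Ordinal.limitRecOn_limit _ _ _ _ h

theorem card_le_beth (o : Ordinal) : o.card ≤ Cardinal.beth o := by
  have hs : StrictMono (fun o => (Cardinal.beth o).ord) := fun a b h =>
    Cardinal.ord_lt_ord.2 (Cardinal.beth_strictMono h)
  simpa using Ordinal.card_le_card hs.le_apply

theorem le_beth_ord (c : Cardinal) : c ≤ Cardinal.beth c.ord := by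
  simpa using card_le_beth c.ord

theorem hanf_lt_succ (κ : Cardinal.{u}) (α : Ordinal.{u}) : hanf κ α < hanf κ (Order.succ α) := by
  rw [hanf_succ]
  calc hanf κ α < 2 ^ hanf κ α := Cardinal.cantor _
    _ < Order.succ ((2 : Cardinal) ^ hanf κ α) := Order.lt_succ _
    _ ≤ Cardinal.beth (Order.succ ((2 : Cardinal) ^ hanf κ α)).ord := _root_.le_beth_ord _

theorem hanf_lt_hanf (κ : Cardinal.{u}) : ∀ j i : Ordinal.{u}, i < j → hanf κ i < hanf κ j := by
  intro j
  induction j using Ordinal.induction with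
  | _ j IH =>
    intro i hij
    rcases Ordinal.zero_or_succ_or_isSuccLimit j with h0 | ⟨β, rfl⟩ | hl
    · exact absurd (h0 ▸ hij) (zero_le : (0 : Ordinal) ≤ i).not_gt
    · rcases (Order.lt_succ_iff.1 hij).lt_or_eq with h | rfl
      · exact (IH β (Order.lt_succ β) i h).trans (hanf_lt_succ κ β)
      · exact hanf_lt_succ κ i
    · have h1 : Order.succ i < j := hl.succ_lt hij
      have h2 : hanf κ (Order.succ i) ≤ hanf κ j := by
        rw [hanf_limit κ hl]
        exact le_ciSup (Cardinal.bddAbove_range _) (⟨Order.succ i, h1⟩ : Set.Iio j)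
      exact (hanf_lt_succ κ i).trans_le h2

theorem hanf_mono (κ : Cardinal.{u}) {i j : Ordinal.{u}} (h : i ≤ j) : hanf κ i ≤ hanf κ j := by
  rcases h.lt_or_eq with h | rfl
  · exact (hanf_lt_hanf κ j i h).le
  · exact le_rfl

theorem card_le_hanf (κ : Cardinal.{u}) (i : Ordinal.{u}) : i.card ≤ hanf κ i := by
  have hs : StrictMono (fun i => (hanf κ i).ord) := fun a b h =>
    Cardinal.ord_lt_ord.2 (hanf_lt_hanf κ b a h)
  simpa using Ordinal.card_le_card hs.le_apply

/-- Let `L` be a first-order language with at most `κ` symbols (`κ` an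
infinite cardinal), `δ` a limit ordinal, and `M` an `L`-structure of cardinality
`h_δ(κ)`. Then there is an increasing chain `⟨M_i : i < δ⟩` of elementary substructures
of `M` with `#M_i = h_i(κ)`, `M_i ⊆ M_j` for `i ≤ j < δ`, and `M = ⋃_{i<δ} M_i`. -/
theorem exists_elementary_chain (κ : Cardinal.{u}) (hκ : Cardinal.aleph0 ≤ κ)
    (L : Language.{u}) (hL : L.card ≤ κ) (δ : Ordinal.{u}) (hδ : Order.IsSuccLimit δ)
    (M : Type u) [L.Structure M] (hM : #M = hanf κ δ) :
    ∃ N : Ordinal.{u} → L.ElementarySubstructure M,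
      (∀ i, i < δ → #(N i) = hanf κ i) ∧
      (∀ i j, i ≤ j → j < δ → ((N i : L.Substructure M) ≤ (N j : L.Substructure M))) ∧
      (∀ x : M, ∃ i, i < δ ∧ x ∈ N i) := by
  classical
  have haleph : ∀ i : Ordinal, ℵ₀ ≤ hanf κ i := fun i =>
    hκ.trans ((hanf_zero κ).symm.le.trans (hanf_mono κ (zero_le : (0 : Ordinal) ≤ i)))
  set c := hanf κ δ with hc
  have hMe : #M = #c.ord.ToType := by rw [Cardinal.mk_ord_toType]; exact hM
  obtain ⟨e⟩ := Cardinal.eq.1 hMe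
  haveI : IsWellOrder c.ord.ToType ((· < ·) : c.ord.ToType → c.ord.ToType → Prop) :=
    isWellOrder_lt
  haveI : Nonempty M := Cardinal.mk_ne_zero_iff.1
    (by rw [hM]; exact (Cardinal.aleph0_pos.trans_le (haleph δ)).ne')
  set rank : M → Ordinal.{u} := fun x => Ordinal.typein (α := c.ord.ToType) (· < ·) (e x) with hrankdef
  have hrank : ∀ x, rank x < c.ord := fun x => Ordinal.typein_lt_self (e x)
  set S : Ordinal → Set M := fun i => {x | rank x < (hanf κ i).ord} with hSdef
  -- cardinality of the initial segments
  have hScard : ∀ i, i < δ → #(S i) ≤ hanf κ i := by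
    intro i hi
    have h1 : (hanf κ i).ord < Ordinal.type (α := c.ord.ToType) (· < ·) := by
      rw [Ordinal.type_toType]; exact Cardinal.ord_lt_ord.2 (hanf_lt_hanf κ δ i hi)
    set z := Ordinal.enum (α := c.ord.ToType) (· < ·) ⟨_, h1⟩ with hz
    have hz' : Ordinal.typein (α := c.ord.ToType) (· < ·) z = (hanf κ i).ord :=
      Ordinal.typein_enum _ _
    have hSeq : S i = e ⁻¹' {b | b < z} := by
      ext x
      simp only [hSdef, Set.mem_setOf_eq, Set.mem_preimage]
      rw [← hz']
      exact Ordinal.typein_lt_typein (α := c.ord.ToType) (· < ·)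
    rw [hSeq]
    calc #(e ⁻¹' {b | b < z}) ≤ #{b : c.ord.ToType | b < z} :=
          Cardinal.mk_preimage_of_injective _ _ e.injective
      _ = (Ordinal.typein (α := c.ord.ToType) (· < ·) z).card :=
          (Ordinal.card_typein (r := ((· < ·) : c.ord.ToType → c.ord.ToType → Prop)) z).symm
      _ = hanf κ i := by rw [hz', Cardinal.card_ord]
  -- every element appears in some initial segment
  have hcover : ∀ x : M, ∃ i, i < δ ∧ x ∈ S i := by
    intro x
    have h1 : (rank x).card < c := Cardinal.lt_ord.1 (hrank x)
    by_contra hcon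
    push_neg at hcon
    have h2 : c ≤ (rank x).card := by
      rw [hc, hanf_limit κ hδ]
      haveI : Nonempty (Set.Iio δ) := ⟨⟨0, hδ.pos⟩⟩
      refine ciSup_le fun j => ?_
      have hx := hcon j.1 j.2
      simp only [hSdef, Set.mem_setOf_eq, not_lt] at hx
      exact Cardinal.ord_le.1 hx
    exact absurd h2 (not_le.2 h1)
  -- the choice function
  let pick : Ordinal → Set M → L.ElementarySubstructure M := fun i s =>
    if h : ∃ T : L.ElementarySubstructure M, s ⊆ ↑T ∧ #T = hanf κ i then h.choose else ⊤
  have pickSpec : ∀ i, i < δ → ∀ s : Set M, #s ≤ hanf κ i →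
      s ⊆ ↑(pick i s) ∧ #(pick i s) = hanf κ i := by
    intro i hi s hs
    have hex : ∃ T : L.ElementarySubstructure M, s ⊆ ↑T ∧ #T = hanf κ i := by
      obtain ⟨T, hT1, hT2⟩ := L.exists_elementarySubstructure_card_eq s (hanf κ i) (haleph i)
        (by simpa using hs)
        (by simpa using hL.trans ((hanf_zero κ).symm.le.trans (hanf_mono κ (zero_le : (0 : Ordinal) ≤ i))))
        (by rw [hM]; simpa using hanf_mono κ hi.le)
      exact ⟨T, hT1, by simpa using hT2⟩
    simp only [pick, dif_pos hex]
    exact hex.choose_spec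
  -- the chain
  let N : Ordinal → L.ElementarySubstructure M := fun i =>
    Ordinal.limitRecOn (motive := fun _ => L.ElementarySubstructure M) i
      (pick 0 (S 0))
      (fun α Nα => pick (Order.succ α) ((Nα : Set M) ∪ S (Order.succ α)))
      (fun o _ ih => pick o
        ((⋃ b : o.ToType,
          ((ih ((((Ordinal.ToType.mk (o := o))).symm b : Set.Iio o) : Ordinal)
            (((Ordinal.ToType.mk (o := o))).symm b).2 : L.ElementarySubstructure M) : Set M)) ∪ S o))
  have hN0 : N 0 = pick 0 (S 0) := Ordinal.limitRecOn_zero _ _ _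
  have hNsucc : ∀ α, N (Order.succ α) =
      pick (Order.succ α) ((N α : Set M) ∪ S (Order.succ α)) := fun α =>
    Ordinal.limitRecOn_succ _ _ _ _
  have hNlim : ∀ o, Order.IsSuccLimit o → N o = pick o
      ((⋃ b : o.ToType,
        (N ((((Ordinal.ToType.mk (o := o))).symm b : Set.Iio o) : Ordinal) : Set M)) ∪ S o) :=
    fun o ho => Ordinal.limitRecOn_limit _ _ _ _ ho
  -- the main induction
  have key : ∀ i, i < δ → #(N i) = hanf κ i ∧ S i ⊆ ↑(N i) ∧
      ∀ j, j < i → (N j : Set M) ⊆ (N i : Set M) := by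
    intro i
    induction i using Ordinal.induction with
    | _ i IH =>
      intro hi
      rcases Ordinal.zero_or_succ_or_isSuccLimit i with rfl | ⟨α, rfl⟩ | hl
      · obtain ⟨h1, h2⟩ := pickSpec 0 hi (S 0) (hScard 0 hi)
        rw [hN0]
        exact ⟨h2, h1, fun j hj => absurd hj (zero_le : (0 : Ordinal) ≤ j).not_gt⟩
      · have hα : α < δ := (Order.lt_succ α).trans hi
        obtain ⟨hcard, _, hchain⟩ := IH α (Order.lt_succ α) hα
        have hNαcard : #(N α : Set M) = hanf κ α := by
          rw [SetLike.coe_sort_coe]; exact hcard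
        have hseed : #((N α : Set M) ∪ S (Order.succ α) : Set M) ≤ hanf κ (Order.succ α) := by
          refine (Cardinal.mk_union_le _ _).trans ?_
          have h1 : #(N α : Set M) ≤ hanf κ (Order.succ α) := by
            rw [hNαcard]; exact hanf_mono κ (Order.lt_succ α).le
          have h2 := hScard _ hi
          calc #(N α : Set M) + #(S (Order.succ α)) ≤
              hanf κ (Order.succ α) + hanf κ (Order.succ α) := add_le_add h1 h2
            _ = hanf κ (Order.succ α) := Cardinal.add_eq_right (haleph _) le_rfl
        obtain ⟨h1, h2⟩ := pickSpec _ hi _ hseed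
        rw [hNsucc α]
        refine ⟨h2, Set.subset_union_right.trans h1, ?_⟩
        intro j hj
        rcases (Order.lt_succ_iff.1 hj).lt_or_eq with h | rfl
        · exact (hchain j h).trans (Set.subset_union_left.trans h1)
        · exact Set.subset_union_left.trans h1
      · set g : i.ToType → Set.Iio i := fun b => ((Ordinal.ToType.mk (o := i))).symm b with hg
        have hUcard : #(⋃ b : i.ToType, (N ((g b : Set.Iio i) : Ordinal) : Set M)) ≤
            hanf κ i := by
          refine (Cardinal.mk_iUnion_le _).trans ?_
          have h1 : #i.ToType = i.card := Cardinal.mk_toType i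
          have hne : Nonempty i.ToType := Ordinal.nonempty_toType_iff.2 hl.pos.ne'
          have h2 : (⨆ b : i.ToType, #(N ((g b : Set.Iio i) : Ordinal) : Set M)) ≤ hanf κ i := by
            refine ciSup_le fun b => ?_
            have := (IH _ (g b).2 ((Set.mem_Iio.1 (g b).2).trans hi)).1
            rw [SetLike.coe_sort_coe, this]
            exact hanf_mono κ (Set.mem_Iio.1 (g b).2).le
          calc #i.ToType * (⨆ b : i.ToType, #(N ((g b : Set.Iio i) : Ordinal) : Set M)) ≤
              i.card * hanf κ i := mul_le_mul' h1.le h2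
            _ ≤ hanf κ i * hanf κ i := mul_le_mul_left (card_le_hanf κ i) _
            _ = hanf κ i := Cardinal.mul_eq_self (haleph i)
        have hseed : #(((⋃ b : i.ToType, (N ((g b : Set.Iio i) : Ordinal) : Set M)) ∪ S i :
            Set M)) ≤ hanf κ i := by
          refine (Cardinal.mk_union_le _ _).trans ?_
          calc #(⋃ b : i.ToType, (N ((g b : Set.Iio i) : Ordinal) : Set M)) + #(S i) ≤
              hanf κ i + hanf κ i := add_le_add hUcard (hScard i hi)
            _ = hanf κ i := Cardinal.add_eq_right (haleph _) le_rfl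
        obtain ⟨h1, h2⟩ := pickSpec i hi _ hseed
        rw [hNlim i hl]
        refine ⟨h2, Set.subset_union_right.trans h1, ?_⟩
        intro j hj
        have hsub : (N j : Set M) ⊆ ⋃ b : i.ToType, (N ((g b : Set.Iio i) : Ordinal) : Set M) := by
          have hb : g ((Ordinal.ToType.mk (o := i)) ⟨j, hj⟩) = ⟨j, hj⟩ :=
            ((Ordinal.ToType.mk (o := i))).symm_apply_apply _
          have := Set.subset_iUnion (fun b : i.ToType =>
            (N ((g b : Set.Iio i) : Ordinal) : Set M)) ((Ordinal.ToType.mk (o := i)) ⟨j, hj⟩)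
          rwa [hb] at this
        exact hsub.trans (Set.subset_union_left.trans h1)
  refine ⟨N, fun i hi => (key i hi).1, ?_, ?_⟩
  · intro i j hij hj
    rcases hij.lt_or_eq with h | rfl
    · intro x hx
      exact (key j hj).2.2 i h hx
    · exact le_rfl
  · intro x
    obtain ⟨i, hi, hx⟩ := hcover x
    exact ⟨i, hi, (key i hi).2.1 hx⟩
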